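/- For any transfer system 𝒪 on a finite group G, the set Sub^𝒪(G) of subgroups H with H → G in 𝒪 has a unique minimal element. -/

import Mathlib

/-- A transfer system on a group `G`: a partial order `rel` on subgroups refining the
subgroup relation, closed under conjugation and restriction. -/
structure TransferSystem (G : Type*) [Group G] where
  rel : Subgroup G → Subgroup G → Prop
  le_of_rel : ∀ {K H : Subgroup G}, rel K H → K ≤ H
  refl : ∀ H : Subgroup G, rel H H
  trans : ∀ {J K H : Subgroup G}, rel J K → rel K H → rel J H
  antisymm : ∀ {K H : Subgroup G}, rel K H → rel H K → K = H
  conj : ∀ (g : G) {K H : Subgroup G}, rel K H →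
    rel (K.map (MulAut.conj g).toMonoidHom) (H.map (MulAut.conj g).toMonoidHom)
  restrict : ∀ {K H L : Subgroup G}, rel K H → L ≤ H → rel (K ⊓ L) L

/-- Conjugate subgroup `gKg⁻¹`. -/
def conjSub {G : Type*} [Group G] (g : G) (K : Subgroup G) : Subgroup G :=
  K.map (MulAut.conj g).toMonoidHom

/-- `H_𝒪(J)`: the minimal subgroup containing `J` which transfers to `G` (the top subgroup). -/
noncomputable def HO {G : Type*} [Group G] (O : TransferSystem G) (J : Subgroup G) : Subgroup G :=
  sInf {H : Subgroup G | O.rel H ⊤ ∧ J ≤ H}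

/-- `J ∈ [H]^𝒪`: the inseparability class of `H`, i.e. `H_𝒪(J)` is conjugate to `H`. -/
def inClass {G : Type*} [Group G] (O : TransferSystem G) (H J : Subgroup G) : Prop :=
  ∃ g : G, conjSub g (HO O J) = H

/-- `J` and `K` are 𝒪-inseparable: `H_𝒪(J)` and `H_𝒪(K)` are conjugate. -/
def TSInseparable {G : Type*} [Group G] (O : TransferSystem G) (J K : Subgroup G) : Prop :=
  ∃ g : G, conjSub g (HO O J) = HO O K

/-- `Sub^𝒪(G)` has a unique minimal element. -/
theorem exists_unique_minimal_transferring_subgroup {G : Type*} [Group G] [Finite G]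
    (O : TransferSystem G) :
    ∃! N : Subgroup G, O.rel N ⊤ ∧ ∀ H : Subgroup G, O.rel H ⊤ → N ≤ H := by
  obtain ⟨N, hN, hmin⟩ : ∃ a ∈ {H : Subgroup G | O.rel H ⊤}, ∀ a' ∈ {H : Subgroup G | O.rel H ⊤},
      id a' ≤ id a → id a = id a' := by
    obtain ⟨a, ha⟩ := (Set.toFinite {H : Subgroup G | O.rel H ⊤}).exists_minimal ⟨⊤, O.refl ⊤⟩
    exact ⟨a, ha.1, fun b hb hba => le_antisymm (ha.2 hb hba) hba⟩
  have key : ∀ H : Subgroup G, O.rel H ⊤ → N ≤ H := by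
    intro H hH
    have h2 : O.rel (H ⊓ N) ⊤ := O.trans (O.restrict hH le_top) hN
    have := hmin (H ⊓ N) h2 inf_le_right
    simp only [id] at this
    rw [this]
    exact inf_le_left
  exact ⟨N, ⟨hN, key⟩, fun M ⟨hM, hMmin⟩ => le_antisymm (hMmin N hN) (key M hM)⟩
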